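/- Let f : ℝ^d → ℝ^d be a bounded Lipschitz map, η : ℝ^d → ℝ a continuous nonnegative function supported in the unit ball with ∫η = 1, and define A : ℝ^d × ℝ^d → ℝ by A(q, 0) = 0 and, for p ≠ 0, A(q, p) = ∫_{ℝ^d} η(v) (f(q − ‖p‖v) · p) dv. Then A is C¹ at every point (q, 0), with ∂A/∂q(q, 0) = 0 and ∂A/∂p(q, 0) = f(q). -/

import Mathlib

open MeasureTheory Metric Function
open scoped RealInnerProductSpace Topology

namespace Stmt17
variable {d : ℕ}
local notation "E" => EuclideanSpace ℝ (Fin d)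

noncomputable def Abar (f : E → E) (η : E → ℝ) : E × E → ℝ :=
  fun x => ∫ v, η v * ⟪f (x.1 - ‖x.2‖ • v), x.2⟫

noncomputable def Lq (f : E → E) (q : E) : (E × E) →L[ℝ] ℝ :=
  (innerSL ℝ (f q)).comp (ContinuousLinearMap.snd ℝ E E)

theorem integrable_eta_smul {G : Type*} [NormedAddCommGroup G] [NormedSpace ℝ G]
    {η : E → ℝ} (hηc : Continuous η) (hηsupp : support η ⊆ closedBall 0 1)
    {g : E → G} (hg : Continuous g) : Integrable (fun v => η v • g v) := by
  apply Continuous.integrable_of_hasCompactSupport (hηc.smul hg)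
  apply HasCompactSupport.intro (isCompact_closedBall (0:E) 1)
  intro v hv
  have : η v = 0 := by
    by_contra h
    exact hv (hηsupp h)
  simp [this]

theorem ae_diff_pt (f : E → E) (K : NNReal) (hlip : LipschitzWith K f) (q p : E) (hp : p ≠ 0) :
    ∀ᵐ v : E, DifferentiableAt ℝ f (q - ‖p‖ • v) := by
  set t := ‖p‖ with ht
  have htpos : t ≠ 0 := norm_ne_zero_iff.2 hp
  have hmap : LipschitzWith (‖(t:ℝ)‖₊) (fun v : E => q - t • v) := by
    apply LipschitzWith.of_dist_le_mul
    intro v w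
    simp only [dist_eq_norm]
    rw [show (q - t • v) - (q - t • w) = t • (w - v) by module, norm_smul]
    simp [norm_sub_rev v w, ← dist_eq_norm]
  have hft : LipschitzWith (K * ‖(t:ℝ)‖₊) (fun v => f (q - t • v)) := hlip.comp hmap
  filter_upwards [hft.ae_differentiableAt (μ := volume)] with v hv
  have hpt : t⁻¹ • (q - (q - t • v)) = v := by
    rw [sub_sub_cancel, smul_smul, inv_mul_cancel₀ htpos, one_smul]
  have hinner : DifferentiableAt ℝ (fun u : E => t⁻¹ • (q - u)) (q - t • v) :=
    ((differentiableAt_const q).sub differentiableAt_id).const_smul t⁻¹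
  have hfeq : f = fun u => (fun w => f (q - t • w)) (t⁻¹ • (q - u)) := by
    funext u
    simp only [smul_smul, mul_inv_cancel₀ htpos, one_smul, sub_sub_cancel]
  rw [hfeq]
  exact DifferentiableAt.comp (g := fun w => f (q - t • w)) (f := fun u => t⁻¹ • (q - u))
    (q - t • v) (by simpa only [hpt] using hv) hinner

theorem part1 (f : E → E) (K : NNReal) (hlip : LipschitzWith K f)
    (η : E → ℝ) (hηc : Continuous η) (hη0 : ∀ v, 0 ≤ η v)
    (hηsupp : support η ⊆ closedBall 0 1) (hη1 : ∫ v, η v = 1) (q : E) :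
    HasFDerivAt (Abar f η) (Lq f q) (q, 0) := by
  have hfc : Continuous f := hlip.continuous
  rw [hasFDerivAt_iff_isLittleO_nhds_zero]
  have hA0 : Abar f η (q, 0) = 0 := by simp [Abar]
  have key : ∀ z : E × E,
      ‖Abar f η ((q,0) + z) - Abar f η (q,0) - Lq f q z‖ ≤ (K * (‖z.1‖ + ‖z.2‖)) * ‖z.2‖ := by
    intro z
    have hcont1 : Continuous fun v : E => ⟪f (q + z.1 - ‖z.2‖ • v), z.2⟫ :=
      Continuous.inner (hfc.comp (continuous_const.sub (continuous_const_smul _)))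
        continuous_const
    have hint1 : Integrable (fun v => η v * ⟪f (q + z.1 - ‖z.2‖ • v), z.2⟫) := by
      simpa [smul_eq_mul] using integrable_eta_smul hηc hηsupp hcont1
    have hint2 : Integrable (fun v => η v * ⟪f q, z.2⟫) := by
      simpa [smul_eq_mul] using integrable_eta_smul hηc hηsupp
        (continuous_const : Continuous fun _ : E => (⟪f q, z.2⟫ : ℝ))
    have hint3 : Integrable (fun v => η v * ⟪f (q + z.1 - ‖z.2‖ • v) - f q, z.2⟫) := by
      exact integrable_eta_smul hηc hηsupp
        (Continuous.inner ((hfc.comp (continuous_const.sub (continuous_const_smul _))).sub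
          continuous_const) continuous_const)
    have e1 : Abar f η ((q,0) + z) = ∫ v, η v * ⟪f (q + z.1 - ‖z.2‖ • v), z.2⟫ := by
      simp [Abar]
    have e2 : (Lq f q) z = ∫ v, η v * ⟪f q, z.2⟫ := by
      rw [integral_mul_const, hη1, one_mul]
      simp [Lq]
    calc ‖Abar f η ((q,0) + z) - Abar f η (q,0) - Lq f q z‖
        = ‖∫ v, (η v * ⟪f (q + z.1 - ‖z.2‖ • v), z.2⟫ - η v * ⟪f q, z.2⟫)‖ := by
          rw [e1, hA0, sub_zero, e2, integral_sub hint1 hint2]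
      _ = ‖∫ v, η v * ⟪f (q + z.1 - ‖z.2‖ • v) - f q, z.2⟫‖ := by
          congr 1
          apply integral_congr_ae
          filter_upwards with v
          rw [inner_sub_left, mul_sub]
      _ ≤ ∫ v, η v * ((K * (‖z.1‖ + ‖z.2‖)) * ‖z.2‖) := by
          apply norm_integral_le_of_norm_le
          · simpa [smul_eq_mul] using integrable_eta_smul hηc hηsupp
              (continuous_const : Continuous fun _ : E => ((K : ℝ) * (‖z.1‖ + ‖z.2‖)) * ‖z.2‖)
          · filter_upwards with v
            by_cases hv : η v = 0
            · simp [hv]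
            · have hv1 : ‖v‖ ≤ 1 := by
                have := hηsupp (hv : v ∈ support η)
                simpa [mem_closedBall, dist_zero_right] using this
              have hΔ : ‖f (q + z.1 - ‖z.2‖ • v) - f q‖ ≤ K * (‖z.1‖ + ‖z.2‖) := by
                calc ‖f (q + z.1 - ‖z.2‖ • v) - f q‖
                    ≤ K * ‖(q + z.1 - ‖z.2‖ • v) - q‖ := by
                      have := hlip.dist_le_mul (q + z.1 - ‖z.2‖ • v) q
                      simpa [dist_eq_norm] using this
                  _ = K * ‖z.1 - ‖z.2‖ • v‖ := by
                      congr 1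
                      rw [show (q + z.1 - ‖z.2‖ • v) - q = z.1 - ‖z.2‖ • v by module]
                  _ ≤ K * (‖z.1‖ + ‖z.2‖) := by
                      gcongr
                      calc ‖z.1 - ‖z.2‖ • v‖ ≤ ‖z.1‖ + ‖‖z.2‖ • v‖ := norm_sub_le _ _
                        _ = ‖z.1‖ + ‖z.2‖ * ‖v‖ := by rw [norm_smul, norm_norm]
                        _ ≤ ‖z.1‖ + ‖z.2‖ * 1 := by gcongr
                        _ = ‖z.1‖ + ‖z.2‖ := by ring
              calc ‖η v * ⟪f (q + z.1 - ‖z.2‖ • v) - f q, z.2⟫‖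
                  = η v * |⟪f (q + z.1 - ‖z.2‖ • v) - f q, z.2⟫| := by
                    rw [norm_mul, Real.norm_eq_abs, Real.norm_eq_abs, abs_of_nonneg (hη0 v)]
                _ ≤ η v * (‖f (q + z.1 - ‖z.2‖ • v) - f q‖ * ‖z.2‖) := by
                    gcongr
                    · exact hη0 v
                    · exact abs_real_inner_le_norm _ _
                _ ≤ η v * ((K * (‖z.1‖ + ‖z.2‖)) * ‖z.2‖) := by
                    gcongr
                    exact hη0 v
      _ = (K * (‖z.1‖ + ‖z.2‖)) * ‖z.2‖ := by
          rw [integral_mul_const, hη1, one_mul]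
  rw [Asymptotics.isLittleO_iff]
  intro c hc
  have hpos : (0:ℝ) < c / (2*K+1) := by positivity
  filter_upwards [ball_mem_nhds (0 : E × E) hpos] with z hz
  rw [mem_ball, dist_zero_right] at hz
  have h4 : ‖z‖ * (2*K+1) < c := (lt_div_iff₀ (by positivity)).1 hz
  have h1 : ‖z.1‖ ≤ ‖z‖ := norm_fst_le z
  have h2 : ‖z.2‖ ≤ ‖z‖ := norm_snd_le z
  have h3 : (0:ℝ) ≤ K := K.coe_nonneg
  calc ‖Abar f η ((q,0) + z) - Abar f η (q,0) - Lq f q z‖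
      ≤ (K * (‖z.1‖ + ‖z.2‖)) * ‖z.2‖ := key z
    _ ≤ c * ‖z‖ := by
        have h5 : (‖z.1‖ + ‖z.2‖) * ‖z.2‖ ≤ (2*‖z‖) * ‖z‖ :=
          mul_le_mul (by linarith) h2 (norm_nonneg z.2) (by positivity)
        have h6 := mul_le_mul_of_nonneg_left h5 h3
        have h7 := mul_le_mul_of_nonneg_right h4.le (norm_nonneg z)
        nlinarith [mul_nonneg (norm_nonneg z) (norm_nonneg z)]


set_option maxHeartbeats 2000000 in
theorem part2 (f : E → E) (C : ℝ) (hbd : ∀ x, ‖f x‖ ≤ C) (K : NNReal) (hlip : LipschitzWith K f)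
    (η : E → ℝ) (hηc : Continuous η) (hη0 : ∀ v, 0 ≤ η v)
    (hηsupp : support η ⊆ closedBall 0 1) (hη1 : ∫ v, η v = 1)
    (q p : E) (hp : p ≠ 0) (q₀ : E) :
    ∃ D : (E × E) →L[ℝ] ℝ, HasFDerivAt (Abar f η) D (q, p) ∧
      ‖D - Lq f q₀‖ ≤ K * (3 * ‖p‖ + ‖q - q₀‖) := by
  have hfc : Continuous f := hlip.continuous
  have hK0 : (0:ℝ) ≤ K := K.coe_nonneg
  have hC0 : (0:ℝ) ≤ C := (norm_nonneg (f q)).trans (hbd q)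
  set N : E →L[ℝ] ℝ := fderiv ℝ (fun y : E => ‖y‖) p with hNdef
  have hN : HasFDerivAt (fun y : E => ‖y‖) N p :=
    ((contDiffAt_norm ℝ (n := 1) hp).differentiableAt one_ne_zero).hasFDerivAt
  have hNle : ‖N‖ ≤ 1 := by
    have := norm_fderiv_le_of_lipschitz (𝕜 := ℝ) (f := fun y : E => ‖y‖) (x₀ := p)
      lipschitzWith_one_norm
    simpa using this
  set Dphi : E → (E × E) →L[ℝ] E := fun v =>
    (ContinuousLinearMap.fst ℝ E E) -
      (N.comp (ContinuousLinearMap.snd ℝ E E)).smulRight v with hDphidef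
  have hphi : ∀ v : E, HasFDerivAt (fun x : E × E => x.1 - ‖x.2‖ • v) (Dphi v) (q, p) := by
    intro v
    have h2 : HasFDerivAt (fun x : E × E => ‖x.2‖)
        (N.comp (ContinuousLinearMap.snd ℝ E E)) (q, p) :=
      hN.comp (q, p) hasFDerivAt_snd
    exact hasFDerivAt_fst.sub (h2.smul_const v)
  have hDphin : ∀ v : E, ‖v‖ ≤ 1 → ‖Dphi v‖ ≤ 2 := by
    intro v hv
    apply ContinuousLinearMap.opNorm_le_bound _ (by norm_num)
    intro z
    have h1 : ‖(Dphi v) z‖ = ‖z.1 - (N z.2) • v‖ := by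
      simp [hDphidef]
    rw [h1]
    have h2 : |N z.2| ≤ ‖z.2‖ := by
      calc |N z.2| ≤ ‖N‖ * ‖z.2‖ := by
            simpa [Real.norm_eq_abs] using N.le_opNorm z.2
        _ ≤ 1 * ‖z.2‖ := by gcongr
        _ = ‖z.2‖ := one_mul _
    calc ‖z.1 - (N z.2) • v‖ ≤ ‖z.1‖ + ‖(N z.2) • v‖ := norm_sub_le _ _
      _ = ‖z.1‖ + |N z.2| * ‖v‖ := by rw [norm_smul, Real.norm_eq_abs]
      _ ≤ ‖z‖ + ‖z‖ * 1 := by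
          gcongr
          · exact norm_fst_le z
          · exact h2.trans (norm_snd_le z)
      _ = 2 * ‖z‖ := by ring
  have hae : ∀ᵐ v : E, DifferentiableAt ℝ f (q - ‖p‖ • v) := ae_diff_pt f K hlip q p hp
  set F : E × E → E → ℝ := fun x v => η v * ⟪f (x.1 - ‖x.2‖ • v), x.2⟫ with hFdef
  set F' : E → (E × E) →L[ℝ] ℝ := fun v =>
    η v • (((innerSL ℝ p).comp ((fderiv ℝ f (q - ‖p‖ • v)).comp (Dphi v))) +
      (innerSL ℝ (f (q - ‖p‖ • v))).comp (ContinuousLinearMap.snd ℝ E E)) with hF'def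
  have h_diff : ∀ᵐ v : E, HasFDerivAt (F · v) (F' v) (q, p) := by
    filter_upwards [hae] with v hv
    have hd1 : HasFDerivAt (fun x : E × E => f (x.1 - ‖x.2‖ • v))
        ((fderiv ℝ f (q - ‖p‖ • v)).comp (Dphi v)) (q, p) :=
      hv.hasFDerivAt.comp (q, p) (hphi v)
    have hd2 := HasFDerivAt.inner (𝕜 := ℝ) hd1 hasFDerivAt_snd
    have hd3 := hd2.const_mul (η v)
    refine hd3.congr_fderiv (Eq.symm ?_)
    refine ContinuousLinearMap.ext fun z => ?_
    simp only [hF'def, ContinuousLinearMap.smul_apply, ContinuousLinearMap.add_apply,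
      ContinuousLinearMap.coe_comp', Function.comp_apply, ContinuousLinearMap.prod_apply,
      fderivInnerCLM_apply, ContinuousLinearMap.coe_snd', innerSL_apply_apply, smul_eq_mul]
    rw [real_inner_comm]
    ring
  -- measurability of F'
  have hwc : Continuous fun v : E => q - ‖p‖ • v :=
    continuous_const.sub (continuous_const_smul _)
  have hDphic : Continuous Dphi := by
    rw [hDphidef]
    refine continuous_const.sub ?_
    set c := N.comp (ContinuousLinearMap.snd ℝ E E) with hc
    have hl : LipschitzWith ‖c‖₊ (fun v : E => c.smulRight v) := by
      apply LipschitzWith.of_dist_le_mul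
      intro v w
      have e : c.smulRight v - c.smulRight w = c.smulRight (v - w) := by
        refine ContinuousLinearMap.ext fun z => ?_
        simp [smul_sub]
      rw [dist_eq_norm, e, ContinuousLinearMap.norm_smulRight_apply, ← dist_eq_norm]
      simp
    exact hl.continuous
  have hmeasM : Measurable fun v : E => fderiv ℝ f (q - ‖p‖ • v) :=
    (measurable_fderiv ℝ f).comp hwc.measurable
  have hT1cont : Continuous fun z : (E →L[ℝ] E) × E =>
      (innerSL ℝ p).comp (z.1.comp (Dphi z.2)) :=
    continuous_const.clm_comp (continuous_fst.clm_comp (hDphic.comp continuous_snd))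
  have hmeas1 : Measurable fun v : E =>
      (innerSL ℝ p).comp ((fderiv ℝ f (q - ‖p‖ • v)).comp (Dphi v)) :=
    hT1cont.measurable.comp (hmeasM.prodMk measurable_id)
  have hcont2 : Continuous fun v : E =>
      (innerSL ℝ (f (q - ‖p‖ • v))).comp (ContinuousLinearMap.snd ℝ E E) :=
    (((innerSL ℝ).continuous).comp (hfc.comp hwc)).clm_comp continuous_const
  have hsmulc : Continuous fun z : ℝ × ((E × E) →L[ℝ] ℝ) => z.1 • z.2 := continuous_smul
  have hF'meas : AEStronglyMeasurable F' (volume : Measure E) := by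
    rw [hF'def]
    exact (hsmulc.measurable.comp (hηc.measurable.prodMk
      (hmeas1.add hcont2.measurable))).aestronglyMeasurable
  -- Lipschitz bound
  set bound : E → ℝ := fun v => η v * (C + 2 * K * ‖p‖) with hbdef
  have hb_int : Integrable bound := by
    simpa [smul_eq_mul, hbdef] using integrable_eta_smul hηc hηsupp
      (continuous_const : Continuous fun _ : E => (C + 2 * (K:ℝ) * ‖p‖))
  have h_lip : ∀ᵐ v : E, ∀ x ∈ ball ((q, p) : E × E) 1,
      ‖F x v - F (q, p) v‖ ≤ bound v * ‖x - (q, p)‖ := by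
    filter_upwards with v
    intro x hx
    by_cases hv0 : η v = 0
    · simp [hFdef, hbdef, hv0]
    · have hv1 : ‖v‖ ≤ 1 := by
        have := hηsupp (hv0 : v ∈ support η)
        simpa [mem_closedBall, dist_zero_right] using this
      have hsub1 : ‖x.1 - q‖ ≤ ‖x - (q, p)‖ := norm_fst_le (x - (q, p))
      have hsub2 : ‖x.2 - p‖ ≤ ‖x - (q, p)‖ := norm_snd_le (x - (q, p))
      have hfa : ‖f (x.1 - ‖x.2‖ • v) - f (q - ‖p‖ • v)‖ ≤ K * (2 * ‖x - (q, p)‖) := by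
        have h0 := hlip.dist_le_mul (x.1 - ‖x.2‖ • v) (q - ‖p‖ • v)
        have ha : ‖(x.1 - ‖x.2‖ • v) - (q - ‖p‖ • v)‖ ≤ 2 * ‖x - (q, p)‖ := by
          have e : (x.1 - ‖x.2‖ • v) - (q - ‖p‖ • v) = (x.1 - q) - (‖x.2‖ - ‖p‖) • v := by
            rw [sub_smul]; abel
          rw [e]
          calc ‖(x.1 - q) - (‖x.2‖ - ‖p‖) • v‖
              ≤ ‖x.1 - q‖ + ‖(‖x.2‖ - ‖p‖) • v‖ := norm_sub_le _ _
            _ = ‖x.1 - q‖ + |‖x.2‖ - ‖p‖| * ‖v‖ := by rw [norm_smul, Real.norm_eq_abs]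
            _ ≤ ‖x - (q, p)‖ + ‖x.2 - p‖ * 1 := by
                gcongr
                exact abs_norm_sub_norm_le _ _
            _ ≤ ‖x - (q, p)‖ + ‖x - (q, p)‖ * 1 := by gcongr
            _ = 2 * ‖x - (q, p)‖ := by ring
        calc ‖f (x.1 - ‖x.2‖ • v) - f (q - ‖p‖ • v)‖
            ≤ K * ‖(x.1 - ‖x.2‖ • v) - (q - ‖p‖ • v)‖ := by
              simpa [dist_eq_norm] using h0
          _ ≤ K * (2 * ‖x - (q, p)‖) := by gcongr
      have e2 : F x v - F (q, p) v =
          η v * (⟪f (x.1 - ‖x.2‖ • v), x.2 - p⟫ +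
            ⟪f (x.1 - ‖x.2‖ • v) - f (q - ‖p‖ • v), p⟫) := by
        show η v * ⟪f (x.1 - ‖x.2‖ • v), x.2⟫ - η v * ⟪f (q - ‖p‖ • v), p⟫ = _
        rw [inner_sub_right, inner_sub_left]
        ring
      rw [e2]
      calc ‖η v * (⟪f (x.1 - ‖x.2‖ • v), x.2 - p⟫ +
            ⟪f (x.1 - ‖x.2‖ • v) - f (q - ‖p‖ • v), p⟫)‖
          = η v * |⟪f (x.1 - ‖x.2‖ • v), x.2 - p⟫ +
            ⟪f (x.1 - ‖x.2‖ • v) - f (q - ‖p‖ • v), p⟫| := by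
            rw [norm_mul, Real.norm_eq_abs, Real.norm_eq_abs, abs_of_nonneg (hη0 v)]
        _ ≤ η v * (C * ‖x - (q, p)‖ + (K * (2 * ‖x - (q, p)‖)) * ‖p‖) := by
            gcongr η v * ?_
            · exact hη0 v
            calc |⟪f (x.1 - ‖x.2‖ • v), x.2 - p⟫ +
                  ⟪f (x.1 - ‖x.2‖ • v) - f (q - ‖p‖ • v), p⟫|
                ≤ |⟪f (x.1 - ‖x.2‖ • v), x.2 - p⟫| +
                  |⟪f (x.1 - ‖x.2‖ • v) - f (q - ‖p‖ • v), p⟫| := abs_add_le _ _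
              _ ≤ ‖f (x.1 - ‖x.2‖ • v)‖ * ‖x.2 - p‖ +
                  ‖f (x.1 - ‖x.2‖ • v) - f (q - ‖p‖ • v)‖ * ‖p‖ :=
                  add_le_add (abs_real_inner_le_norm _ _) (abs_real_inner_le_norm _ _)
              _ ≤ C * ‖x - (q, p)‖ + (K * (2 * ‖x - (q, p)‖)) * ‖p‖ := by
                  gcongr
                  exact hbd _
        _ = bound v * ‖x - (q, p)‖ := by rw [hbdef]; ring
  have hcF : ∀ x : E × E, Continuous (F x) := by
    intro x
    rw [hFdef]
    exact hηc.mul (Continuous.inner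
      (hfc.comp (continuous_const.sub (continuous_const_smul _))) continuous_const)
  have hF_meas : ∀ x ∈ ball ((q, p) : E × E) 1, AEStronglyMeasurable (F x) volume :=
    fun x _ => (hcF x).aestronglyMeasurable
  have hF_int : Integrable (F (q, p)) := by
    have := integrable_eta_smul hηc hηsupp (Continuous.inner
      (hfc.comp (continuous_const.sub (continuous_const_smul _))) continuous_const
        : Continuous fun v : E => (⟪f (q - ‖p‖ • v), p⟫ : ℝ))
    simpa [hFdef, smul_eq_mul] using this
  obtain ⟨hF'int, hderiv⟩ := hasFDerivAt_integral_of_dominated_loc_of_lip' (ball_mem_nhds _ one_pos)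
    hF_meas hF_int hF'meas h_lip hb_int h_diff
  refine ⟨∫ v, F' v, ?_, ?_⟩
  · have e5 : Abar f η = fun x => ∫ v, F x v := by rw [hFdef]; rfl
    rw [e5]
    exact hderiv
  · have hintL : Integrable (fun v => η v • Lq f q₀) :=
      integrable_eta_smul hηc hηsupp continuous_const
    have e3 : (∫ v, F' v) - Lq f q₀ = ∫ v, (F' v - η v • Lq f q₀) := by
      rw [integral_sub hF'int hintL, integral_smul_const, hη1, one_smul]
    rw [e3]
    have hb2 : Integrable (fun v : E => η v * ((K:ℝ) * (3 * ‖p‖ + ‖q - q₀‖))) := by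
      simpa [smul_eq_mul] using integrable_eta_smul hηc hηsupp
        (continuous_const : Continuous fun _ : E => ((K:ℝ) * (3 * ‖p‖ + ‖q - q₀‖)))
    calc ‖∫ v, (F' v - η v • Lq f q₀)‖
        ≤ ∫ v, η v * ((K:ℝ) * (3 * ‖p‖ + ‖q - q₀‖)) := by
          apply norm_integral_le_of_norm_le hb2
          filter_upwards with v
          by_cases hv0 : η v = 0
          · simp [hF'def, hv0]
          · have hv1 : ‖v‖ ≤ 1 := by
              have := hηsupp (hv0 : v ∈ support η)
              simpa [mem_closedBall, dist_zero_right] using this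
            have hM : ‖fderiv ℝ f (q - ‖p‖ • v)‖ ≤ K :=
              norm_fderiv_le_of_lipschitz (𝕜 := ℝ) hlip
            have hT1 : ‖(innerSL ℝ p).comp ((fderiv ℝ f (q - ‖p‖ • v)).comp (Dphi v))‖
                ≤ ‖p‖ * (K * 2) := by
              calc ‖(innerSL ℝ p).comp ((fderiv ℝ f (q - ‖p‖ • v)).comp (Dphi v))‖
                  ≤ ‖innerSL ℝ p‖ * ‖(fderiv ℝ f (q - ‖p‖ • v)).comp (Dphi v)‖ :=
                    ContinuousLinearMap.opNorm_comp_le _ _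
                _ ≤ ‖innerSL ℝ p‖ * (‖fderiv ℝ f (q - ‖p‖ • v)‖ * ‖Dphi v‖) := by
                    gcongr
                    exact ContinuousLinearMap.opNorm_comp_le _ _
                _ ≤ ‖p‖ * (K * 2) := by
                    rw [innerSL_apply_norm]
                    gcongr
                    exact hDphin v hv1
            have hT2 : ‖(innerSL ℝ (f (q - ‖p‖ • v))).comp (ContinuousLinearMap.snd ℝ E E) -
                (innerSL ℝ (f q₀)).comp (ContinuousLinearMap.snd ℝ E E)‖
                ≤ K * (‖q - q₀‖ + ‖p‖) := by
              have e4 : (innerSL ℝ (f (q - ‖p‖ • v))).comp (ContinuousLinearMap.snd ℝ E E) -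
                  (innerSL ℝ (f q₀)).comp (ContinuousLinearMap.snd ℝ E E) =
                  (innerSL ℝ (f (q - ‖p‖ • v) - f q₀)).comp (ContinuousLinearMap.snd ℝ E E) := by
                refine ContinuousLinearMap.ext fun z => ?_
                simp only [ContinuousLinearMap.sub_apply, ContinuousLinearMap.coe_comp',
                  Function.comp_apply, ContinuousLinearMap.coe_snd', innerSL_apply_apply,
                  inner_sub_left]
              rw [e4]
              have hΔ : ‖f (q - ‖p‖ • v) - f q₀‖ ≤ K * (‖q - q₀‖ + ‖p‖) := by
                have h0 := hlip.dist_le_mul (q - ‖p‖ • v) q₀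
                calc ‖f (q - ‖p‖ • v) - f q₀‖ ≤ K * ‖(q - ‖p‖ • v) - q₀‖ := by
                      simpa [dist_eq_norm] using h0
                  _ ≤ K * (‖q - q₀‖ + ‖p‖) := by
                      gcongr
                      calc ‖(q - ‖p‖ • v) - q₀‖ = ‖(q - q₀) - ‖p‖ • v‖ := by
                            rw [show (q - ‖p‖ • v) - q₀ = (q - q₀) - ‖p‖ • v by abel]
                        _ ≤ ‖q - q₀‖ + ‖‖p‖ • v‖ := norm_sub_le _ _
                        _ = ‖q - q₀‖ + ‖p‖ * ‖v‖ := by rw [norm_smul, norm_norm]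
                        _ ≤ ‖q - q₀‖ + ‖p‖ * 1 := by gcongr
                        _ = ‖q - q₀‖ + ‖p‖ := by ring
              apply ContinuousLinearMap.opNorm_le_bound _
                (by positivity)
              intro z
              calc ‖((innerSL ℝ (f (q - ‖p‖ • v) - f q₀)).comp
                    (ContinuousLinearMap.snd ℝ E E)) z‖
                  = |⟪f (q - ‖p‖ • v) - f q₀, z.2⟫| := by
                    simp only [ContinuousLinearMap.coe_comp', Function.comp_apply,
                      ContinuousLinearMap.coe_snd', innerSL_apply_apply, Real.norm_eq_abs]
                _ ≤ ‖f (q - ‖p‖ • v) - f q₀‖ * ‖z.2‖ := abs_real_inner_le_norm _ _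
                _ ≤ (K * (‖q - q₀‖ + ‖p‖)) * ‖z‖ := by
                    gcongr
                    exact norm_snd_le z
            have e6 : F' v - η v • Lq f q₀ = η v •
                (((innerSL ℝ p).comp ((fderiv ℝ f (q - ‖p‖ • v)).comp (Dphi v)) +
                  (innerSL ℝ (f (q - ‖p‖ • v))).comp (ContinuousLinearMap.snd ℝ E E)) -
                  Lq f q₀) := by
              rw [hF'def, smul_sub]
            have hS : ‖((innerSL ℝ p).comp ((fderiv ℝ f (q - ‖p‖ • v)).comp (Dphi v)) +
                  (innerSL ℝ (f (q - ‖p‖ • v))).comp (ContinuousLinearMap.snd ℝ E E)) -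
                  Lq f q₀‖ ≤ (K:ℝ) * (3 * ‖p‖ + ‖q - q₀‖) := by
              calc ‖((innerSL ℝ p).comp ((fderiv ℝ f (q - ‖p‖ • v)).comp (Dphi v)) +
                    (innerSL ℝ (f (q - ‖p‖ • v))).comp (ContinuousLinearMap.snd ℝ E E)) -
                    Lq f q₀‖
                  = ‖(innerSL ℝ p).comp ((fderiv ℝ f (q - ‖p‖ • v)).comp (Dphi v)) +
                    ((innerSL ℝ (f (q - ‖p‖ • v))).comp (ContinuousLinearMap.snd ℝ E E) -
                    Lq f q₀)‖ := by rw [add_sub_assoc]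
                _ ≤ ‖(innerSL ℝ p).comp ((fderiv ℝ f (q - ‖p‖ • v)).comp (Dphi v))‖ +
                    ‖(innerSL ℝ (f (q - ‖p‖ • v))).comp (ContinuousLinearMap.snd ℝ E E) -
                    Lq f q₀‖ := norm_add_le _ _
                _ ≤ ‖p‖ * (K * 2) + K * (‖q - q₀‖ + ‖p‖) := add_le_add hT1 hT2
                _ = (K:ℝ) * (3 * ‖p‖ + ‖q - q₀‖) := by ring
            rw [e6]
            refine ContinuousLinearMap.opNorm_le_bound _
              (mul_nonneg (hη0 v) (by positivity)) fun z => ?_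
            rw [ContinuousLinearMap.smul_apply, norm_smul, Real.norm_eq_abs,
              abs_of_nonneg (hη0 v)]
            calc η v * ‖(((innerSL ℝ p).comp ((fderiv ℝ f (q - ‖p‖ • v)).comp (Dphi v)) +
                  (innerSL ℝ (f (q - ‖p‖ • v))).comp (ContinuousLinearMap.snd ℝ E E) -
                  Lq f q₀)) z‖
                ≤ η v * (‖((innerSL ℝ p).comp ((fderiv ℝ f (q - ‖p‖ • v)).comp (Dphi v)) +
                  (innerSL ℝ (f (q - ‖p‖ • v))).comp (ContinuousLinearMap.snd ℝ E E) -
                  Lq f q₀)‖ * ‖z‖) := by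
                  gcongr <;> first | exact hη0 v | exact ContinuousLinearMap.le_opNorm _ z
              _ ≤ η v * (((K:ℝ) * (3 * ‖p‖ + ‖q - q₀‖)) * ‖z‖) := by
                  gcongr <;> first | exact hη0 v | exact hS
              _ = (η v * ((K:ℝ) * (3 * ‖p‖ + ‖q - q₀‖))) * ‖z‖ := by ring
      _ = (K:ℝ) * (3 * ‖p‖ + ‖q - q₀‖) := by rw [integral_mul_const, hη1, one_mul]

theorem lq_dist (f : E → E) (K : NNReal) (hlip : LipschitzWith K f) (a q : E) :
    ‖Lq f a - Lq f q‖ ≤ (K:ℝ) * ‖a - q‖ := by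
  have e : Lq f a - Lq f q = (innerSL ℝ (f a - f q)).comp (ContinuousLinearMap.snd ℝ E E) := by
    refine ContinuousLinearMap.ext fun z => ?_
    simp only [Lq, ContinuousLinearMap.sub_apply, ContinuousLinearMap.coe_comp',
      Function.comp_apply, ContinuousLinearMap.coe_snd', innerSL_apply_apply, inner_sub_left]
  rw [e]
  have hfa : ‖f a - f q‖ ≤ (K:ℝ) * ‖a - q‖ := by
    simpa [dist_eq_norm] using hlip.dist_le_mul a q
  refine ContinuousLinearMap.opNorm_le_bound _ (by positivity) fun z => ?_
  calc ‖((innerSL ℝ (f a - f q)).comp (ContinuousLinearMap.snd ℝ E E)) z‖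
      = |⟪f a - f q, z.2⟫| := by
        simp only [ContinuousLinearMap.coe_comp', Function.comp_apply,
          ContinuousLinearMap.coe_snd', innerSL_apply_apply, Real.norm_eq_abs]
    _ ≤ ‖f a - f q‖ * ‖z.2‖ := abs_real_inner_le_norm _ _
    _ ≤ ((K:ℝ) * ‖a - q‖) * ‖z‖ := by
        gcongr
        exact norm_snd_le z

end Stmt17

open Stmt17 in
/-- Let f : ℝ^d → ℝ^d be a bounded Lipschitz map, η a continuous nonnegative mollifier
supported in the unit ball with ∫ η = 1, and A(q, 0) = 0,
A(q, p) = ∫ η(v) (f(q − ‖p‖v) · p) dv for p ≠ 0.  Then A is C¹ at every point (q, 0),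
with ∂A/∂q(q, 0) = 0 and ∂A/∂p(q, 0) = f(q). -/
theorem stmt_17 {d : ℕ}
    (f : EuclideanSpace ℝ (Fin d) → EuclideanSpace ℝ (Fin d))
    (C : ℝ) (hbd : ∀ x, ‖f x‖ ≤ C) (K : NNReal) (hlip : LipschitzWith K f)
    (η : EuclideanSpace ℝ (Fin d) → ℝ)
    (hηc : Continuous η) (hη0 : ∀ v, 0 ≤ η v)
    (hηsupp : Function.support η ⊆ Metric.closedBall 0 1)
    (hη1 : ∫ v, η v = 1)
    (A : EuclideanSpace ℝ (Fin d) × EuclideanSpace ℝ (Fin d) → ℝ)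
    (hA0 : ∀ q, A (q, 0) = 0)
    (hA : ∀ q p, p ≠ 0 → A (q, p) = ∫ v, η v * ⟪f (q - ‖p‖ • v), p⟫) :
    ∀ q : EuclideanSpace ℝ (Fin d),
      HasFDerivAt A
        ((innerSL ℝ (f q)).comp
          (ContinuousLinearMap.snd ℝ (EuclideanSpace ℝ (Fin d)) (EuclideanSpace ℝ (Fin d))))
        (q, 0) ∧
      ContinuousAt (fderiv ℝ A) (q, 0) := by
  intro q
  have hAeq : A = Abar f η := by
    funext x
    obtain ⟨a, b⟩ := x
    rcases eq_or_ne b 0 with h | h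
    · subst h
      rw [hA0]
      simp [Abar]
    · rw [hA a b h]
      rfl
  have hp1 := part1 f K hlip η hηc hη0 hηsupp hη1
  constructor
  · rw [hAeq]
    exact hp1 q
  · have hkey : ∀ x : EuclideanSpace ℝ (Fin d) × EuclideanSpace ℝ (Fin d),
        ‖fderiv ℝ (Abar f η) x - Lq f q‖ ≤ (K:ℝ) * (3 * ‖x.2‖ + ‖x.1 - q‖) := by
      intro x
      obtain ⟨a, b⟩ := x
      rcases eq_or_ne b 0 with h | h
      · subst h
        rw [(hp1 a).fderiv]
        calc ‖Lq f a - Lq f q‖ ≤ (K:ℝ) * ‖a - q‖ := lq_dist f K hlip a q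
          _ ≤ (K:ℝ) * (3 * ‖((a, (0:EuclideanSpace ℝ (Fin d)))).2‖ +
              ‖((a, (0:EuclideanSpace ℝ (Fin d)))).1 - q‖) := by simp
      · obtain ⟨D, hD, hDb⟩ := part2 f C hbd K hlip η hηc hη0 hηsupp hη1 a b h q
        rw [hD.fderiv]
        exact hDb
    have hlim : Filter.Tendsto
        (fun x : EuclideanSpace ℝ (Fin d) × EuclideanSpace ℝ (Fin d) =>
          (K:ℝ) * (3 * ‖x.2‖ + ‖x.1 - q‖)) (𝓝 (q, 0)) (𝓝 0) := by
      have hc : Continuous fun x : EuclideanSpace ℝ (Fin d) × EuclideanSpace ℝ (Fin d) =>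
          (K:ℝ) * (3 * ‖x.2‖ + ‖x.1 - q‖) :=
        continuous_const.mul ((continuous_const.mul continuous_snd.norm).add
          ((continuous_fst.sub continuous_const).norm))
      have := hc.tendsto (q, 0)
      simpa using this
    have h0 := squeeze_zero_norm hkey hlim
    have h1 : Filter.Tendsto (fderiv ℝ (Abar f η)) (𝓝 (q, 0)) (𝓝 (Lq f q)) :=
      tendsto_sub_nhds_zero_iff.1 h0
    rw [hAeq]
    have hval : fderiv ℝ (Abar f η) (q, 0) = Lq f q := (hp1 q).fderiv
    unfold ContinuousAt
    rw [hval]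
    exact h1
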